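/- For all modal trees T, T', if T ↪ T' (one rewriting step in TRC), then ℱ(T) ⊢ ℱ(T') is derivable in RC. -/

import Mathlib

namespace TRC

/-- Strictly positive formulas of `L⁺`. -/
inductive SPF : Type where
  | top : SPF
  | var : ℕ → SPF
  | dia : ℕ → SPF → SPF
  | and : SPF → SPF → SPF

/-- The sequent system `K⁺`. -/
inductive KPlus : SPF → SPF → Prop where
  | id (φ) : KPlus φ φ
  | topI (φ) : KPlus φ .top
  | cut {φ ψ χ} : KPlus φ ψ → KPlus ψ χ → KPlus φ χ
  | andE₁ (φ ψ) : KPlus (.and φ ψ) φ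
  | andE₂ (φ ψ) : KPlus (.and φ ψ) ψ
  | andI {φ ψ χ} : KPlus φ ψ → KPlus φ χ → KPlus φ (.and ψ χ)
  | dist {φ ψ} (α) : KPlus φ ψ → KPlus (.dia α φ) (.dia α ψ)

/-- The Reflection Calculus `RC`. -/
inductive RC : SPF → SPF → Prop where
  | id (φ) : RC φ φ
  | topI (φ) : RC φ .top
  | cut {φ ψ χ} : RC φ ψ → RC ψ χ → RC φ χ
  | andE₁ (φ ψ) : RC (.and φ ψ) φ
  | andE₂ (φ ψ) : RC (.and φ ψ) ψ
  | andI {φ ψ χ} : RC φ ψ → RC φ χ → RC φ (.and ψ χ)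
  | dist {φ ψ} (α) : RC φ ψ → RC (.dia α φ) (.dia α ψ)
  | trans (α φ) : RC (.dia α (.dia α φ)) (.dia α φ)
  | mono {α β} (φ) : β < α → RC (.dia α φ) (.dia β φ)
  | jax {α β} (φ ψ) : β < α → RC (.and (.dia α φ) (.dia β ψ)) (.dia α (.and φ (.dia β ψ)))

/-- Modal depth. -/
def SPF.md : SPF → ℕ
  | .top => 0
  | .var _ => 0
  | .dia _ φ => φ.md + 1
  | .and φ ψ => max φ.md ψ.md

/-- Modal trees. -/
inductive MTree : Type where
  | node : List ℕ → List (ℕ × MTree) → MTree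

/-- Sum of modal trees. -/
def MTree.sum : MTree → MTree → MTree
  | .node Δ₁ Γ₁, .node Δ₂ Γ₂ => .node (Δ₁ ++ Δ₂) (Γ₁ ++ Γ₂)

mutual
/-- Height of a modal tree. -/
def MTree.height : MTree → ℕ
  | .node _ Γ => heightL Γ
def heightL : List (ℕ × MTree) → ℕ
  | [] => 0
  | (_, S) :: Γ => max (S.height + 1) (heightL Γ)
end

mutual
/-- `T.IsPos k`: the (1-indexed) string `k` is a position of `T`. -/
def MTree.IsPos : MTree → List ℕ → Prop
  | _, [] => True
  | .node _ Γ, i :: k => isPosL Γ i k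
def isPosL : List (ℕ × MTree) → ℕ → List ℕ → Prop
  | [], _, _ => False
  | _ :: _, 0, _ => False
  | (_, S) :: _, 1, k => S.IsPos k
  | _ :: Γ, n+2, k => isPosL Γ (n+1) k
end

mutual
/-- Subtree of `T` at position `k` (returning a default junk value off positions). -/
def MTree.subtree : MTree → List ℕ → MTree
  | T, [] => T
  | .node Δ Γ, i :: k => subtreeL (.node Δ Γ) Γ i k
def subtreeL : MTree → List (ℕ × MTree) → ℕ → List ℕ → MTree
  | d, [], _, _ => d
  | d, _ :: _, 0, _ => d
  | _, (_, S) :: _, 1, k => S.subtree k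
  | d, _ :: Γ, n+2, k => subtreeL d Γ (n+1) k
end

mutual
/-- `T.replace S k`: replace the subtree of `T` at position `k` by `S`. -/
def MTree.replace : MTree → MTree → List ℕ → MTree
  | _, S, [] => S
  | .node Δ Γ, S, i :: k => .node Δ (replaceL Γ S i k)
def replaceL : List (ℕ × MTree) → MTree → ℕ → List ℕ → List (ℕ × MTree)
  | [], _, _, _ => []
  | Γ, _, 0, _ => Γ
  | (α, C) :: Γ, S, 1, k => (α, C.replace S k) :: Γ
  | x :: Γ, S, n+2, k => x :: replaceL Γ S (n+1) k
end

/-- Names of the eight rewriting rules of TRC. -/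
inductive Rule : Type where
  | rhoP | rhoM | sigma | piP | piM | four | lam | jay
  deriving DecidableEq

/-- One rewriting step performed at the root. -/
inductive RootStep : Rule → MTree → MTree → Prop where
  | rhoP {Δ Γ i p} (hi : 1 ≤ i) (h : Δ[i-1]? = some p) :
      RootStep .rhoP (.node Δ Γ) (.node (p :: Δ) Γ)
  | rhoM {Δ Γ i} (hi : 1 ≤ i) (h : i - 1 < Δ.length) :
      RootStep .rhoM (.node Δ Γ) (.node (Δ.eraseIdx (i-1)) Γ)
  | sigma {Δ Γ i j x y} (hi : 1 ≤ i) (hj : 1 ≤ j) (hij : i ≠ j)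
      (hx : Γ[i-1]? = some x) (hy : Γ[j-1]? = some y) :
      RootStep .sigma (.node Δ Γ) (.node Δ ((Γ.set (j-1) x).set (i-1) y))
  | piP {Δ Γ i x} (hi : 1 ≤ i) (hx : Γ[i-1]? = some x) :
      RootStep .piP (.node Δ Γ) (.node Δ (x :: Γ))
  | piM {Δ Γ i} (hi : 1 ≤ i) (h : i - 1 < Γ.length) :
      RootStep .piM (.node Δ Γ) (.node Δ (Γ.eraseIdx (i-1)))
  | four {Δ Γ i j β Δt Γt S} (hi : 1 ≤ i) (hj : 1 ≤ j)
      (hΓ : Γ[i-1]? = some (β, MTree.node Δt Γt)) (hΓt : Γt[j-1]? = some (β, S)) :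
      RootStep .four (.node Δ Γ) (.node Δ (Γ.set (i-1) (β, S)))
  | lam {Δ Γ i α β S} (hi : 1 ≤ i) (hβ : β < α) (hΓ : Γ[i-1]? = some (α, S)) :
      RootStep .lam (.node Δ Γ) (.node Δ (Γ.set (i-1) (β, S)))
  | jay {Δ Γ i j α β Δt Γt S} (hi : 1 ≤ i) (hj : 1 ≤ j) (hij : i ≠ j) (hβ : β < α)
      (hΓi : Γ[i-1]? = some (α, MTree.node Δt Γt)) (hΓj : Γ[j-1]? = some (β, S)) :
      RootStep .jay (.node Δ Γ)
        (.node Δ ((Γ.set (i-1) (α, MTree.node Δt (Γt ++ [(β, S)]))).eraseIdx (j-1)))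

/-- One step of the rule `r`, applied at some position. -/
def StepR (r : Rule) (T T' : MTree) : Prop :=
  ∃ k S, T.IsPos k ∧ RootStep r (T.subtree k) S ∧ T' = T.replace S k

/-- One step of the rewriting relation `↪`. -/
def Step (T T' : MTree) : Prop := ∃ r, StepR r T T'

/-- The rewriting relation `↪*`. -/
def Steps : MTree → MTree → Prop := Relation.ReflTransGen Step

/-- TRC-equivalence `↔*`. -/
def TEquiv (T T' : MTree) : Prop := Steps T T' ∧ Steps T' T

/-- `T ↪^Ω S` : rewriting applying the rules of `Ω` in order, one step each. -/
inductive StepsOf : List Rule → MTree → MTree → Prop where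
  | nil (T) : StepsOf [] T T
  | cons {r Ω T U S} : StepR r T U → StepsOf Ω U S → StepsOf (r :: Ω) T S

def AtomicStep (T S : MTree) : Prop := StepR .rhoP T S ∨ StepR .rhoM T S
def DecreasingStep (T S : MTree) : Prop := StepR .piM T S ∨ StepR .four T S
def ModalStep (T S : MTree) : Prop := StepR .lam T S ∨ StepR .jay T S

/-- Finite conjunctions (empty conjunction is `⊤`). -/
def bigAnd : List SPF → SPF
  | [] => .top
  | φ :: l => .and φ (bigAnd l)

mutual
/-- The embedding `ℱ` of modal trees into formulas. -/
def MTree.toFormula : MTree → SPF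
  | .node Δ Γ => .and (bigAnd (Δ.map SPF.var)) (diamL Γ)
def diamL : List (ℕ × MTree) → SPF
  | [] => .top
  | (α, S) :: Γ => .and (.dia α S.toFormula) (diamL Γ)
end

/-- The embedding `𝒯` of formulas into modal trees. -/
def SPF.toTree : SPF → MTree
  | .top => .node [] []
  | .var p => .node [p] []
  | .dia α φ => .node [] [(α, φ.toTree)]
  | .and φ ψ => φ.toTree.sum ψ.toTree

/-- Nonempty conjunction `φ₁ ∧ (φ₂ ∧ (… ∧ φₙ))`. -/
def conjNE : SPF → List SPF → SPF
  | φ, [] => φ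
  | φ, ψ :: l => .and φ (conjNE ψ l)


lemma rc_bigAnd_intro {X : SPF} {L : List SPF} (h : ∀ φ ∈ L, RC X φ) :
    RC X (bigAnd L) := by
  induction L with
  | nil => exact .topI _
  | cons φ l ih =>
      exact .andI (h φ (.head _)) (ih fun ψ hm => h ψ (.tail _ hm))

lemma rc_bigAnd_elim {L : List SPF} {φ} (h : φ ∈ L) : RC (bigAnd L) φ := by
  induction L with
  | nil => cases h
  | cons ψ l ih =>
      cases h with
      | head => exact .andE₁ _ _
      | tail _ h => exact .cut (.andE₂ _ _) (ih h)

/-- Formula of a labelled subtree. -/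
def toF : ℕ × MTree → SPF
  | (α, S) => .dia α S.toFormula

lemma diamL_cons (x : ℕ × MTree) (Γ) :
    diamL (x :: Γ) = .and (toF x) (diamL Γ) := by
  cases x; rfl

lemma rc_diamL_intro {X} {Γ : List (ℕ × MTree)} (h : ∀ x ∈ Γ, RC X (toF x)) :
    RC X (diamL Γ) := by
  induction Γ with
  | nil => exact .topI _
  | cons x Γ ih =>
      rw [diamL_cons]
      exact .andI (h x (.head _)) (ih fun y hm => h y (.tail _ hm))

lemma rc_diamL_elim {Γ : List (ℕ × MTree)} {x} (h : x ∈ Γ) :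
    RC (diamL Γ) (toF x) := by
  induction Γ with
  | nil => cases h
  | cons y Γ ih =>
      rw [diamL_cons]
      cases h with
      | head => exact .andE₁ _ _
      | tail _ h => exact .cut (.andE₂ _ _) (ih h)

lemma rc_diamL_append {X} {A B : List (ℕ × MTree)}
    (hA : RC X (diamL A)) (hB : RC X (diamL B)) : RC X (diamL (A ++ B)) := by
  induction A with
  | nil => exact hB
  | cons x A ih =>
      rw [diamL_cons] at hA
      rw [List.cons_append, diamL_cons]
      exact .andI (.cut hA (.andE₁ _ _)) (ih (.cut hA (.andE₂ _ _)))

lemma toFormula_node (Δ Γ) :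
    MTree.toFormula (.node Δ Γ) = .and (bigAnd (Δ.map SPF.var)) (diamL Γ) := rfl

lemma root_adequacy {r : Rule} {T T' : MTree} (h : RootStep r T T') :
    RC T.toFormula T'.toFormula := by
  cases h with
  | @rhoP Δ Γ i p hi hp =>
      rw [toFormula_node, toFormula_node]
      refine .andI (.andI (.cut (.andE₁ _ _) (rc_bigAnd_elim ?_)) (.andE₁ _ _)) (.andE₂ _ _)
      exact List.mem_map_of_mem (List.mem_of_getElem? hp)
  | @rhoM Δ Γ i hi hlen =>
      rw [toFormula_node, toFormula_node]
      refine .andI (.cut (.andE₁ _ _) (rc_bigAnd_intro ?_)) (.andE₂ _ _)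
      intro φ hφ
      obtain ⟨q, hq, rfl⟩ := List.mem_map.1 hφ
      exact rc_bigAnd_elim (List.mem_map_of_mem (List.eraseIdx_subset hq))
  | @sigma Δ Γ i j x y hi hj hij hx hy =>
      rw [toFormula_node, toFormula_node]
      refine .andI (.andE₁ _ _) (.cut (.andE₂ _ _) (rc_diamL_intro ?_))
      intro z hz
      rcases List.mem_or_eq_of_mem_set hz with hz | rfl
      · rcases List.mem_or_eq_of_mem_set hz with hz | rfl
        · exact rc_diamL_elim hz
        · exact rc_diamL_elim (List.mem_of_getElem? hx)
      · exact rc_diamL_elim (List.mem_of_getElem? hy)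
  | @piP Δ Γ i x hi hx =>
      rw [toFormula_node, toFormula_node, diamL_cons]
      exact .andI (.andE₁ _ _)
        (.andI (.cut (.andE₂ _ _) (rc_diamL_elim (List.mem_of_getElem? hx))) (.andE₂ _ _))
  | @piM Δ Γ i hi hlen =>
      rw [toFormula_node, toFormula_node]
      refine .andI (.andE₁ _ _) (.cut (.andE₂ _ _) (rc_diamL_intro ?_))
      intro z hz
      exact rc_diamL_elim (List.eraseIdx_subset hz)
  | @four Δ Γ i j β Δt Γt S hi hj hΓ hΓt =>
      rw [toFormula_node, toFormula_node]
      refine .andI (.andE₁ _ _) (.cut (.andE₂ _ _) (rc_diamL_intro ?_))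
      intro z hz
      rcases List.mem_or_eq_of_mem_set hz with hz | rfl
      · exact rc_diamL_elim hz
      · refine .cut (rc_diamL_elim (List.mem_of_getElem? hΓ)) ?_
        show RC (.dia β (MTree.toFormula (.node Δt Γt))) (toF (β, S))
        refine .cut (.dist β (.cut (.andE₂ _ _)
          (rc_diamL_elim (x := (β, S)) (List.mem_of_getElem? hΓt)))) ?_
        exact .trans β _
  | @lam Δ Γ i α β S hi hβ hΓ =>
      rw [toFormula_node, toFormula_node]
      refine .andI (.andE₁ _ _) (.cut (.andE₂ _ _) (rc_diamL_intro ?_))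
      intro z hz
      rcases List.mem_or_eq_of_mem_set hz with hz | rfl
      · exact rc_diamL_elim hz
      · exact .cut (rc_diamL_elim (List.mem_of_getElem? hΓ)) (.mono _ hβ)
  | @jay Δ Γ i j α β Δt Γt S hi hj hij hβ hΓi hΓj =>
      rw [toFormula_node, toFormula_node]
      refine .andI (.andE₁ _ _) (.cut (.andE₂ _ _) (rc_diamL_intro ?_))
      intro z hz
      have hz' := List.eraseIdx_subset hz
      rcases List.mem_or_eq_of_mem_set hz' with hz' | rfl
      · exact rc_diamL_elim hz'
      · -- the modified element
        have h1 : RC (diamL Γ) (.dia α (MTree.toFormula (.node Δt Γt))) :=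
          rc_diamL_elim (x := (α, MTree.node Δt Γt)) (List.mem_of_getElem? hΓi)
        have h2 : RC (diamL Γ) (.dia β S.toFormula) :=
          rc_diamL_elim (x := (β, S)) (List.mem_of_getElem? hΓj)
        refine .cut (.cut (.andI h1 h2) (.jax _ _ hβ)) (.dist α ?_)
        rw [toFormula_node, toFormula_node]
        refine .andI (.cut (.andE₁ _ _) (.andE₁ _ _)) ?_
        refine rc_diamL_append (.cut (.andE₁ _ _) (.andE₂ _ _)) ?_
        rw [diamL_cons]
        exact .andI (.andE₂ _ _) (.topI _)

mutual
theorem replace_congr : ∀ (T : MTree) (k : List ℕ) (S : MTree), T.IsPos k →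
    RC (T.subtree k).toFormula S.toFormula →
    RC T.toFormula ((T.replace S k).toFormula)
  | T, [], S, _, h => by
      have e1 : T.subtree [] = T := by simp [MTree.subtree]
      have e2 : T.replace S [] = S := by simp [MTree.replace]
      rw [e1] at h; rw [e2]; exact h
  | .node Δ Γ, i :: k, S, hpos, h => by
      rw [toFormula_node]
      show RC _ (MTree.toFormula (.node Δ (replaceL Γ S i k)))
      rw [toFormula_node]
      exact .andI (.andE₁ _ _) (.cut (.andE₂ _ _)
        (replace_congrL (.node Δ Γ) Γ i k S hpos h))

theorem replace_congrL : ∀ (d : MTree) (Γ : List (ℕ × MTree)) (i : ℕ) (k : List ℕ)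
    (S : MTree), isPosL Γ i k →
    RC (subtreeL d Γ i k).toFormula S.toFormula →
    RC (diamL Γ) (diamL (replaceL Γ S i k))
  | _, [], _, _, _, hpos, _ => absurd hpos (by simp [isPosL])
  | _, _ :: _, 0, _, _, hpos, _ => absurd hpos (by simp [isPosL])
  | d, (α, C) :: Γ, 1, k, S, hpos, h => by
      rw [diamL_cons]
      show RC _ (diamL ((α, C.replace S k) :: Γ))
      rw [diamL_cons]
      refine .andI (.cut (.andE₁ _ _) ?_) (.andE₂ _ _)
      exact .dist α (replace_congr C k S hpos h)
  | d, x :: Γ, n+2, k, S, hpos, h => by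
      rw [diamL_cons]
      show RC _ (diamL (x :: replaceL Γ S (n+1) k))
      rw [diamL_cons]
      exact .andI (.andE₁ _ _) (.cut (.andE₂ _ _) (replace_congrL d Γ (n+1) k S hpos h))
end

end TRC
/-- one-step adequacy: if `T ↪ T'` then `ℱ(T) ⊢_{RC} ℱ(T')`. -/
theorem adequacy_step (T T' : TRC.MTree) (h : TRC.Step T T') :
    TRC.RC T.toFormula T'.toFormula := by
  obtain ⟨r, k, S, hpos, hroot, rfl⟩ := h
  exact TRC.replace_congr T k S hpos (TRC.root_adequacy hroot)
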